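/- Let ρ^c be the density matrix on ℂ²⊗ℂ² given by ρ^c = ½ (E₀⊗E₀) + ½ (E₁⊗E₁), where E₀, E₁ are the standard-basis rank-one projections on ℂ². Then N_H^b(ρ^c⊗ρ^c) = 3/4; in particular the measurement-induced nonbilocality can be strictly positive for a pair of separable input states. -/

import Mathlib

open scoped Matrix Kronecker BigOperators ComplexOrder
open Matrix

/-- The positive-semidefinite square root of a PSD matrix (0 if not PSD). -/
noncomputable def psdSqrt {N : Type*} [Fintype N] [DecidableEq N] (A : Matrix N N ℂ) :
    Matrix N N ℂ :=
  open scoped Classical in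
  if h : A.PosSemidef then
    (h.1.eigenvectorUnitary : Matrix N N ℂ) *
      Matrix.diagonal (fun i => ((Real.sqrt (h.1.eigenvalues i) : ℝ) : ℂ)) *
      (star h.1.eigenvectorUnitary : Matrix N N ℂ)
  else 0

/-- Squared Frobenius (Hilbert–Schmidt) norm: `‖X‖² = tr (Xᴴ X)`. -/
noncomputable def hsNormSq {N : Type*} [Fintype N] (X : Matrix N N ℂ) : ℝ :=
  (Matrix.trace (Xᴴ * X)).re

/-- A density matrix: positive semidefinite with unit trace. -/
def IsDensity {N : Type*} [Fintype N] [DecidableEq N] (ρ : Matrix N N ℂ) : Prop :=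
  ρ.PosSemidef ∧ ρ.trace = 1

/-- Standard inner product on `ℂ^N`. -/
noncomputable def cInner {N : Type*} [Fintype N] (x y : N → ℂ) : ℂ :=
  ∑ i, star (x i) * y i

/-- Outer product `ψ ψ†`. -/
noncomputable def outer {N : Type*} (ψ : N → ℂ) : Matrix N N ℂ :=
  Matrix.vecMulVec ψ (star ψ)

/-- The family of unit vectors of a rank-one von Neumann measurement: an orthonormal basis,
indexed by the dimension. -/
def IsVNM {N : Type*} [Fintype N] [DecidableEq N] (u : N → N → ℂ) : Prop :=
  ∀ a b, cInner (u a) (u b) = if a = b then (1 : ℂ) else 0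

/-- The rank-one projection `Π_h = u_h u_h†` of a measurement. -/
noncomputable def projOf {N : Type*} (u : N → N → ℂ) (h : N) : Matrix N N ℂ :=
  outer (u h)

/-- The measurement `{u_h u_h†}` fixes `σ`: `Σ_h Π_h σ Π_h = σ`. -/
def FixesVNM {N : Type*} [Fintype N] (u : N → N → ℂ) (σ : Matrix N N ℂ) : Prop :=
  ∑ h, projOf u h * σ * projOf u h = σ

/-- Reduced state of the second factor: `(ρ_B)_{j j'} = Σ_i ρ_{(i,j),(i,j')}`. -/
noncomputable def redB {m n : ℕ} (ρ : Matrix (Fin m × Fin n) (Fin m × Fin n) ℂ) :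
    Matrix (Fin n) (Fin n) ℂ :=
  Matrix.of fun j j' => ∑ i, ρ (i, j) (i, j')

/-- Reduced state of the first factor: `(ρ_C)_{k k'} = Σ_l ρ_{(k,l),(k',l)}`. -/
noncomputable def redC {u v : ℕ} (ρ : Matrix (Fin u × Fin v) (Fin u × Fin v) ℂ) :
    Matrix (Fin u) (Fin u) ℂ :=
  Matrix.of fun k k' => ∑ l, ρ (k, l) (k', l)

/-- `I_m ⊗ P ⊗ I_v` acting on the middle two factors. -/
noncomputable def ampMid (m v : ℕ) {n u : ℕ} (P : Matrix (Fin n × Fin u) (Fin n × Fin u) ℂ) :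
    Matrix ((Fin m × Fin n) × Fin u × Fin v) ((Fin m × Fin n) × Fin u × Fin v) ℂ :=
  Matrix.of fun p q =>
    (if p.1.1 = q.1.1 then (1 : ℂ) else 0) * P (p.1.2, p.2.1) (q.1.2, q.2.1) *
      (if p.2.2 = q.2.2 then (1 : ℂ) else 0)

/-- The map `Π^{BC}(X) = Σ_h (I_m ⊗ Π_h ⊗ I_v) X (I_m ⊗ Π_h ⊗ I_v)`. -/
noncomputable def pinchBC {m n u v : ℕ} (w : (Fin n × Fin u) → (Fin n × Fin u) → ℂ)
    (X : Matrix ((Fin m × Fin n) × Fin u × Fin v) ((Fin m × Fin n) × Fin u × Fin v) ℂ) :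
    Matrix ((Fin m × Fin n) × Fin u × Fin v) ((Fin m × Fin n) × Fin u × Fin v) ℂ :=
  ∑ h, ampMid m v (projOf w h) * X * ampMid m v (projOf w h)

/-- The measurement-induced nonbilocality `N_H^b(ρ_AB ⊗ ρ_CD)`. -/
noncomputable def NHb {m n u v : ℕ}
    (ρAB : Matrix (Fin m × Fin n) (Fin m × Fin n) ℂ)
    (ρCD : Matrix (Fin u × Fin v) (Fin u × Fin v) ℂ) : ℝ :=
  sSup { r : ℝ | ∃ w : (Fin n × Fin u) → (Fin n × Fin u) → ℂ,
    IsVNM w ∧ FixesVNM w (redB ρAB ⊗ₖ redC ρCD) ∧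
    r = hsNormSq (psdSqrt (ρAB ⊗ₖ ρCD) - pinchBC w (psdSqrt (ρAB ⊗ₖ ρCD))) }

/-- A separable density matrix on `ℂ^p ⊗ ℂ^q`. -/
def Separable {p q : ℕ} (τ : Matrix (Fin p × Fin q) (Fin p × Fin q) ℂ) : Prop :=
  ∃ (k : ℕ) (t : Fin k → ℝ) (σ : Fin k → Matrix (Fin p) (Fin p) ℂ)
    (ω : Fin k → Matrix (Fin q) (Fin q) ℂ),
    (∀ i, 0 ≤ t i) ∧ (∀ i, IsDensity (σ i)) ∧ (∀ i, IsDensity (ω i)) ∧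
      τ = ∑ i, ((t i : ℝ) : ℂ) • (σ i ⊗ₖ ω i)

/-- The classical two-qubit state `ρ^c = ½ E₀⊗E₀ + ½ E₁⊗E₁`. -/
noncomputable def rhoc : Matrix (Fin 2 × Fin 2) (Fin 2 × Fin 2) ℂ :=
  ((1 / 2 : ℝ) : ℂ) •
      (Matrix.single 0 0 (1 : ℂ) ⊗ₖ Matrix.single 0 0 (1 : ℂ)) +
    ((1 / 2 : ℝ) : ℂ) •
      (Matrix.single 1 1 (1 : ℂ) ⊗ₖ Matrix.single 1 1 (1 : ℂ))

/-! ### Auxiliary development -/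

section Aux

abbrev QT := (Fin 2 × Fin 2) × Fin 2 × Fin 2
abbrev NT := Fin 2 × Fin 2

noncomputable def dvec : QT → ℂ :=
  fun p => if p.1.1 = p.1.2 ∧ p.2.1 = p.2.2 then (1/2 : ℂ) else 0

noncomputable def SS : Matrix QT QT ℂ := Matrix.diagonal dvec

lemma ampMid_mul (m v : ℕ) {n u : ℕ} (M N : Matrix (Fin n × Fin u) (Fin n × Fin u) ℂ) :
    ampMid m v M * ampMid m v N = ampMid m v (M * N) := by
  ext ⟨⟨a, x1⟩, x2, b⟩ ⟨⟨c, y1⟩, y2, d⟩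
  simp only [ampMid, mul_apply, of_apply, Fintype.sum_prod_type]
  simp only [ite_mul, zero_mul, one_mul, mul_ite, mul_zero, mul_one,
    Finset.sum_ite_eq, Finset.mem_univ, if_true, Finset.sum_ite_irrel, Finset.sum_const_zero]
  by_cases hac : a = c <;> by_cases hbd : b = d <;>
    simp [hac, hbd, Finset.mul_sum, Finset.sum_mul]

lemma ampMid_zero (m v : ℕ) {n u : ℕ} :
    ampMid m v (0 : Matrix (Fin n × Fin u) (Fin n × Fin u) ℂ) = 0 := by
  ext p q; simp [ampMid]

lemma conjT_ampMid (m v : ℕ) {n u : ℕ} (M : Matrix (Fin n × Fin u) (Fin n × Fin u) ℂ) :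
    (ampMid m v M)ᴴ = ampMid m v Mᴴ := by
  ext p q
  simp only [ampMid, conjTranspose_apply, of_apply, star_mul', apply_ite (star : ℂ → ℂ),
    star_one, star_zero]
  split_ifs with h1 h2 h3 h4 h5 h6 h7 h8
  all_goals try ring1
  all_goals exfalso
  all_goals
    first
      | exact ‹¬p.2.2 = q.2.2› ‹q.2.2 = p.2.2›.symm
      | exact ‹¬p.1.1 = q.1.1› ‹q.1.1 = p.1.1›.symm
      | exact ‹¬q.2.2 = p.2.2› ‹p.2.2 = q.2.2›.symm
      | exact ‹¬q.1.1 = p.1.1› ‹p.1.1 = q.1.1›.symm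

lemma projOf_conjT {N : Type*} [Fintype N] (w : N → N → ℂ) (h : N) :
    (projOf w h)ᴴ = projOf w h := by
  ext i j
  simp only [projOf, outer, conjTranspose_apply, vecMulVec_apply, Pi.star_apply, star_mul']
  ring_nf
  simp [mul_comm]

lemma projOf_mul_projOf {N : Type*} [Fintype N] [DecidableEq N] {w : N → N → ℂ}
    (hw : IsVNM w) (h h' : N) :
    projOf w h * projOf w h' = if h = h' then projOf w h' else 0 := by
  have key := hw h h'
  simp only [cInner] at key
  ext i j
  simp only [projOf, outer, mul_apply, vecMulVec_apply, Pi.star_apply]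
  have : ∑ k, w h i * star (w h k) * (w h' k * star (w h' j))
      = (∑ k, star (w h k) * w h' k) * (w h i * star (w h' j)) := by
    rw [Finset.sum_mul]
    apply Finset.sum_congr rfl
    intro k _
    ring
  rw [this, key]
  by_cases hh : h = h' <;> simp [hh, Matrix.zero_apply, vecMulVec_apply]

lemma vnm_colsum {N : Type*} [Fintype N] [DecidableEq N] {w : N → N → ℂ}
    (hw : IsVNM w) :
    (Matrix.of w)ᴴ * Matrix.of w = 1 := by
  have huv : (Matrix.of w) * (Matrix.of w)ᴴ = 1 := by
    ext a b
    have key := congrArg (starRingEnd ℂ) (hw a b)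
    simp only [cInner, map_sum, _root_.map_mul, RingHomCompTriple.comp_apply, RingHom.id_apply,
      Complex.conj_conj, apply_ite (starRingEnd ℂ), _root_.map_one, _root_.map_zero] at key
    simpa [mul_apply, conjTranspose_apply, one_apply, mul_comm] using key
  exact mul_eq_one_comm.mp huv

lemma sum_projOf {N : Type*} [Fintype N] [DecidableEq N] {w : N → N → ℂ}
    (hw : IsVNM w) : ∑ h, projOf w h = 1 := by
  have hvu := vnm_colsum hw
  ext i j
  have h0 : ((Matrix.of w)ᴴ * Matrix.of w) i j = (1 : Matrix N N ℂ) i j := by rw [hvu]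
  have := congrArg (starRingEnd ℂ) h0
  simp only [mul_apply, conjTranspose_apply, of_apply, map_sum, _root_.map_mul,
    Complex.conj_conj, one_apply, apply_ite (starRingEnd ℂ), _root_.map_one,
    _root_.map_zero] at this
  simpa [Matrix.sum_apply, projOf, outer, vecMulVec_apply, mul_comm, one_apply] using this

lemma colsum_normSq {w : NT → NT → ℂ} (hw : IsVNM w) (x : NT) :
    ∑ h, Complex.normSq (w h x) = 1 := by
  have hvu := vnm_colsum hw
  have this : ((Matrix.of w)ᴴ * Matrix.of w) x x = (1 : Matrix NT NT ℂ) x x := by rw [hvu]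
  simp only [mul_apply, conjTranspose_apply, of_apply, one_apply, if_pos rfl, if_true] at this
  have : ∑ h, (Complex.normSq (w h x) : ℂ) = 1 := by
    rw [← this]
    apply Finset.sum_congr rfl
    intro h _
    rw [Complex.normSq_eq_conj_mul_self]; rfl
  exact_mod_cast this

end Aux
section Aux2

lemma SS_hermitian : SSᴴ = SS := by
  have hstar : star dvec = dvec := by
    funext p
    simp only [Pi.star_apply, dvec]
    split_ifs <;> simp [Complex.ext_iff]
  rw [SS, Matrix.diagonal_conjTranspose, hstar]

lemma trace_dAdB {n' : Type*} [Fintype n'] [DecidableEq n'] (d : n' → ℂ) (A B : Matrix n' n' ℂ) :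
    Matrix.trace (Matrix.diagonal d * A * Matrix.diagonal d * B) =
      ∑ p, ∑ r, d p * A p r * (d r * B r p) := by
  simp only [Matrix.trace, Matrix.diag_apply, Matrix.mul_apply, Matrix.diagonal_apply,
    ite_mul, mul_ite, zero_mul, mul_zero, Finset.sum_ite_eq, Finset.sum_ite_eq',
    Finset.mem_univ, if_true]
  apply Finset.sum_congr rfl
  intro p _
  apply Finset.sum_congr rfl
  intro r _
  ring

lemma trace_SPSP (M : Matrix NT NT ℂ) :
    Matrix.trace (SS * ampMid 2 2 M * SS * ampMid 2 2 M) = (1/4 : ℂ) * ∑ x, (M x x) ^ 2 := by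
  rw [SS, trace_dAdB]
  simp only [dvec, ampMid, of_apply, Fintype.sum_prod_type, Fin.sum_univ_two]
  norm_num [Prod.ext_iff]
  ring

lemma trace_SS_SS : Matrix.trace (SS * SS) = 1 := by
  rw [SS, Matrix.diagonal_mul_diagonal, Matrix.trace_diagonal]
  simp only [dvec, Fintype.sum_prod_type, Fin.sum_univ_two]
  norm_num

/-- Real quantity `Σ_{h,x} |w h x|⁴`. -/
noncomputable def rQ (w : NT → NT → ℂ) : ℝ := ∑ h, ∑ x, (Complex.normSq (w h x))^2

lemma trace_S_pinch {w : NT → NT → ℂ} :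
    Matrix.trace (SS * pinchBC w SS) = (((1:ℝ)/4) * rQ w : ℝ) := by
  rw [pinchBC, Finset.mul_sum, Matrix.trace_sum]
  have term : ∀ h, Matrix.trace (SS * (ampMid 2 2 (projOf w h) * SS * ampMid 2 2 (projOf w h)))
      = (((1:ℝ)/4) * ∑ x, (Complex.normSq (w h x))^2 : ℝ) := by
    intro h
    rw [show SS * (ampMid 2 2 (projOf w h) * SS * ampMid 2 2 (projOf w h))
        = SS * ampMid 2 2 (projOf w h) * SS * ampMid 2 2 (projOf w h) by
      rw [← mul_assoc, ← mul_assoc]]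
    rw [trace_SPSP]
    have : ∀ x : NT, (projOf w h x x) ^ 2 = ((Complex.normSq (w h x))^2 : ℝ) := by
      intro x
      have : projOf w h x x = (Complex.normSq (w h x) : ℂ) := by
        simp only [projOf, outer, vecMulVec_apply, Pi.star_apply]
        rw [Complex.normSq_eq_conj_mul_self]
        ring_nf
        rfl
      rw [this]
      push_cast
      ring
    rw [Finset.sum_congr rfl (fun x _ => this x)]
    push_cast
    ring
  rw [Finset.sum_congr rfl (fun h _ => term h), rQ]
  push_cast
  rw [Finset.mul_sum]

lemma pinch_hermitian {w : NT → NT → ℂ} : (pinchBC w SS)ᴴ = pinchBC w SS := by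
  rw [pinchBC, Matrix.conjTranspose_sum]
  apply Finset.sum_congr rfl
  intro h _
  rw [Matrix.conjTranspose_mul, Matrix.conjTranspose_mul, conjT_ampMid, projOf_conjT,
    SS_hermitian, mul_assoc]

lemma trace_pinch_pinch {w : NT → NT → ℂ} (hw : IsVNM w) :
    Matrix.trace (pinchBC w SS * pinchBC w SS) = Matrix.trace (SS * pinchBC w SS) := by
  conv_lhs => rw [pinchBC, Finset.sum_mul_sum]
  simp only [Matrix.trace_sum]
  have term : ∀ h h', Matrix.trace ((ampMid 2 2 (projOf w h) * SS * ampMid 2 2 (projOf w h)) *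
        (ampMid 2 2 (projOf w h') * SS * ampMid 2 2 (projOf w h')))
      = if h = h' then
          Matrix.trace (SS * (ampMid 2 2 (projOf w h) * SS * ampMid 2 2 (projOf w h)))
        else 0 := by
    intro h h'
    have hmm : ampMid 2 2 (projOf w h) * ampMid 2 2 (projOf w h')
        = if h = h' then ampMid 2 2 (projOf w h) else 0 := by
      rw [ampMid_mul, projOf_mul_projOf hw]
      by_cases hh : h = h' <;> simp [hh, ampMid_zero]
    by_cases hh : h = h'
    · subst hh
      rw [if_pos rfl]
      have hPP : ampMid 2 2 (projOf w h) * ampMid 2 2 (projOf w h) = ampMid 2 2 (projOf w h) := by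
        rw [hmm, if_pos rfl]
      calc Matrix.trace ((ampMid 2 2 (projOf w h) * SS * ampMid 2 2 (projOf w h)) *
            (ampMid 2 2 (projOf w h) * SS * ampMid 2 2 (projOf w h)))
          = Matrix.trace (ampMid 2 2 (projOf w h) *
              (SS * ampMid 2 2 (projOf w h) * SS * ampMid 2 2 (projOf w h))) := by
            congr 1
            rw [show ampMid 2 2 (projOf w h) * SS * ampMid 2 2 (projOf w h) *
                (ampMid 2 2 (projOf w h) * SS * ampMid 2 2 (projOf w h))
               = ampMid 2 2 (projOf w h) * SS *
                  (ampMid 2 2 (projOf w h) * ampMid 2 2 (projOf w h)) * SS *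
                  ampMid 2 2 (projOf w h) by
              simp only [mul_assoc]]
            rw [hPP]
            simp only [mul_assoc]
        _ = Matrix.trace ((SS * ampMid 2 2 (projOf w h) * SS * ampMid 2 2 (projOf w h)) *
              ampMid 2 2 (projOf w h)) := by rw [Matrix.trace_mul_comm]
        _ = Matrix.trace (SS * ampMid 2 2 (projOf w h) * SS *
              (ampMid 2 2 (projOf w h) * ampMid 2 2 (projOf w h))) := by
            simp only [mul_assoc]
        _ = Matrix.trace (SS * (ampMid 2 2 (projOf w h) * SS * ampMid 2 2 (projOf w h))) := by
            rw [hPP]; simp only [mul_assoc]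
    · rw [if_neg hh]
      rw [show ampMid 2 2 (projOf w h) * SS * ampMid 2 2 (projOf w h) *
          (ampMid 2 2 (projOf w h') * SS * ampMid 2 2 (projOf w h'))
         = ampMid 2 2 (projOf w h) * SS *
            (ampMid 2 2 (projOf w h) * ampMid 2 2 (projOf w h')) * SS *
            ampMid 2 2 (projOf w h') by simp only [mul_assoc]]
      rw [hmm, if_neg hh]
      simp
  rw [Finset.sum_congr rfl (fun h _ => Finset.sum_congr rfl (fun h' _ => term h h'))]
  have : Matrix.trace (SS * pinchBC w SS)
      = ∑ h, Matrix.trace (SS * (ampMid 2 2 (projOf w h) * SS * ampMid 2 2 (projOf w h))) := by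
    rw [pinchBC, Finset.mul_sum, Matrix.trace_sum]
  rw [this]
  simp only [Finset.sum_ite_eq, Finset.mem_univ, if_true]

lemma value_formula {w : NT → NT → ℂ} (hw : IsVNM w) :
    hsNormSq (SS - pinchBC w SS) = 1 - ((1:ℝ)/4) * rQ w := by
  set T := pinchBC w SS with hT
  have e4 : (SS - T)ᴴ = SS - T := by
    rw [Matrix.conjTranspose_sub, SS_hermitian, hT, pinch_hermitian]
  rw [hsNormSq, e4]
  have expand : (SS - T) * (SS - T) = SS * SS - SS * T - (T * SS - T * T) := by
    rw [sub_mul, mul_sub, mul_sub]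
  rw [expand, Matrix.trace_sub, Matrix.trace_sub, Matrix.trace_sub,
    Matrix.trace_mul_comm T SS, trace_SS_SS, trace_pinch_pinch hw, trace_S_pinch]
  simp [Complex.sub_re, Complex.ofReal_re]

end Aux2
section Aux3

lemma rhoc_apply (a b : Fin 2 × Fin 2) :
    rhoc a b = if a = b ∧ a.1 = a.2 then (1/2 : ℂ) else 0 := by
  obtain ⟨a1, a2⟩ := a
  obtain ⟨b1, b2⟩ := b
  fin_cases a1 <;> fin_cases a2 <;> fin_cases b1 <;> fin_cases b2 <;>
    norm_num [rhoc, Matrix.single, Prod.ext_iff]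

lemma kron_rhoc_eq : rhoc ⊗ₖ rhoc = SS * SS := by
  have hSS : SS * SS = Matrix.diagonal (fun p => dvec p * dvec p) := by
    rw [SS, Matrix.diagonal_mul_diagonal]
  rw [hSS]
  ext p q
  rw [Matrix.kroneckerMap_apply, rhoc_apply, rhoc_apply, Matrix.diagonal_apply]
  rcases p with ⟨⟨p1, p2⟩, p3, p4⟩
  rcases q with ⟨⟨q1, q2⟩, q3, q4⟩
  rw [ite_zero_mul_ite_zero]
  have hd : dvec ((p1, p2), (p3, p4)) * dvec ((p1, p2), (p3, p4))
      = if p1 = p2 ∧ p3 = p4 then ((1:ℂ)/2 * (1/2)) else 0 := by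
    simp only [dvec]
    split_ifs with h1
    · rfl
    · simp
  rw [hd, ← ite_and]
  refine if_congr ?_ rfl rfl
  simp only [Prod.ext_iff]
  tauto

lemma SS_posSemidef : SS.PosSemidef := by
  rw [SS, Matrix.posSemidef_diagonal_iff]
  intro p
  simp only [dvec]
  split_ifs
  · rw [show ((1:ℂ)/2) = ((1/2 : ℝ) : ℂ) by norm_num]
    exact Complex.zero_le_real.mpr (by norm_num)
  · exact le_refl 0
open scoped MatrixOrder in
lemma psdSqrt_eq : psdSqrt (rhoc ⊗ₖ rhoc) = SS := by
  have hpsd2 : (SS * SS).PosSemidef := by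
    rw [SS, Matrix.diagonal_mul_diagonal, Matrix.posSemidef_diagonal_iff]
    intro p
    simp only [dvec]
    split_ifs
    · rw [show ((1:ℂ)/2 * (1/2)) = ((1/4 : ℝ) : ℂ) by norm_num]
      exact Complex.zero_le_real.mpr (by norm_num)
    · simp
  have hpsd : (rhoc ⊗ₖ rhoc).PosSemidef := by rw [kron_rhoc_eq]; exact hpsd2
  rw [psdSqrt, dif_pos hpsd]
  have h2 : cfc Real.sqrt (rhoc ⊗ₖ rhoc) = SS := by
    rw [← cfcₙ_eq_cfc (hf := Real.continuous_sqrt.continuousOn) (hf0 := Real.sqrt_zero),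
      ← CFC.sqrt_eq_real_sqrt _ (Matrix.nonneg_iff_posSemidef.mpr hpsd), kron_rhoc_eq,
      CFC.sqrt_mul_self SS (Matrix.nonneg_iff_posSemidef.mpr SS_posSemidef)]
  exact (hpsd.1.cfc_eq Real.sqrt).symm.trans h2

end Aux3
section Aux4

lemma rQ_ge_one {w : NT → NT → ℂ} (hw : IsVNM w) : 1 ≤ rQ w := by
  have hx : ∀ x : NT, (1:ℝ)/4 ≤ ∑ h, (Complex.normSq (w h x))^2 := by
    intro x
    have h1 := sq_sum_le_card_mul_sum_sq (s := (Finset.univ : Finset NT))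
      (f := fun h => Complex.normSq (w h x))
    rw [colsum_normSq hw x] at h1
    have hcard : (((Finset.univ : Finset NT).card : ℕ) : ℝ) = 4 := by simp
    rw [hcard] at h1
    nlinarith [h1]
  rw [rQ, Finset.sum_comm]
  have : (1:ℝ) = ∑ _x : NT, (1:ℝ)/4 := by
    rw [Finset.sum_const]
    simp
  rw [this]
  exact Finset.sum_le_sum (fun x _ => hx x)

lemma hsn_le {w : NT → NT → ℂ} (hw : IsVNM w) :
    hsNormSq (SS - pinchBC w SS) ≤ 3/4 := by
  rw [value_formula hw]
  have := rQ_ge_one hw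
  linarith

noncomputable def wF : NT → NT → ℂ := fun h x =>
  (((if h.1 = 1 ∧ x.1 = 1 then (-1 : ℝ) else 1) *
    (if h.2 = 1 ∧ x.2 = 1 then (-1 : ℝ) else 1) / 2 : ℝ) : ℂ)

lemma wF_vnm : IsVNM wF := by
  intro a b
  obtain ⟨a1, a2⟩ := a
  obtain ⟨b1, b2⟩ := b
  fin_cases a1 <;> fin_cases a2 <;> fin_cases b1 <;> fin_cases b2 <;>
    · simp only [cInner, wF, Fintype.sum_prod_type, Fin.sum_univ_two]
      norm_num [Complex.ext_iff, Prod.ext_iff, Complex.star_def, Complex.conj_ofReal,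
        Fin.ext_iff]

lemma rQ_wF : rQ wF = 1 := by
  simp only [rQ, wF, Fintype.sum_prod_type, Fin.sum_univ_two, Complex.normSq_ofReal]
  norm_num [Fin.ext_iff]

lemma redkron : redB rhoc ⊗ₖ redC rhoc = ((1:ℂ)/4) • (1 : Matrix NT NT ℂ) := by
  ext ⟨j, k⟩ ⟨j', k'⟩
  rw [Matrix.kroneckerMap_apply]
  simp only [redB, redC, Matrix.of_apply, rhoc_apply, Fin.sum_univ_two, Matrix.smul_apply,
    Matrix.one_apply, smul_eq_mul]
  fin_cases j <;> fin_cases k <;> fin_cases j' <;> fin_cases k' <;>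
    norm_num [Prod.ext_iff, Fin.ext_iff]

lemma fixes_of_vnm {w : NT → NT → ℂ} (hw : IsVNM w) :
    FixesVNM w (redB rhoc ⊗ₖ redC rhoc) := by
  rw [FixesVNM, redkron]
  have term : ∀ h : NT, projOf w h * (((1:ℂ)/4) • (1 : Matrix NT NT ℂ)) * projOf w h
      = ((1:ℂ)/4) • projOf w h := by
    intro h
    rw [Matrix.mul_smul, Matrix.mul_one, Matrix.smul_mul, projOf_mul_projOf hw, if_pos rfl]
  rw [Finset.sum_congr rfl (fun h _ => term h), ← Finset.smul_sum, sum_projOf hw]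

lemma witness_val :
    hsNormSq (psdSqrt (rhoc ⊗ₖ rhoc) - pinchBC wF (psdSqrt (rhoc ⊗ₖ rhoc))) = 3/4 := by
  rw [psdSqrt_eq, value_formula wF_vnm, rQ_wF]
  norm_num

lemma density_E (i : Fin 2) : IsDensity (Matrix.single i i (1:ℂ)) := by
  have hdiag : Matrix.single i i (1:ℂ)
      = Matrix.diagonal (fun j => if j = i then (1:ℂ) else 0) := by
    ext a b
    simp only [Matrix.single, Matrix.of_apply, Matrix.diagonal_apply]
    split_ifs
    all_goals first
      | rfl
      | exact absurd ‹(i = a ∧ i = b)›.1.symm ‹¬a = i›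
      | exact absurd (‹(i = a ∧ i = b)›.1.symm.trans ‹(i = a ∧ i = b)›.2) ‹¬a = b›
      | exact absurd ⟨‹a = i›.symm, ‹a = i›.symm.trans ‹a = b›⟩ ‹¬(i = a ∧ i = b)›
  constructor
  · rw [hdiag, Matrix.posSemidef_diagonal_iff]
    intro j
    split_ifs
    · exact zero_le_one
    · exact le_refl 0
  · rw [hdiag, Matrix.trace_diagonal]
    fin_cases i <;> simp [Fin.sum_univ_two]

lemma separable_rhoc : Separable rhoc := by
  refine ⟨2, ![1/2, 1/2],
    ![Matrix.single 0 0 1, Matrix.single 1 1 1],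
    ![Matrix.single 0 0 1, Matrix.single 1 1 1], ?_, ?_, ?_, ?_⟩
  · intro i; fin_cases i <;> norm_num
  · intro i; fin_cases i <;> simpa using density_E _
  · intro i; fin_cases i <;> simpa using density_E _
  · rw [Fin.sum_univ_two]
    simp only [Matrix.cons_val_zero, Matrix.cons_val_one, Matrix.head_cons]
    rfl

end Aux4
/-- `N_H^b(ρ^c ⊗ ρ^c) = 3/4`; in particular the nonbilocality is strictly
positive although ρ^c is separable. -/
theorem stmt18 :
    NHb rhoc rhoc = 3 / 4 ∧ Separable rhoc ∧ 0 < NHb rhoc rhoc := by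
  have hmem : (3/4 : ℝ) ∈ { r : ℝ | ∃ w : (Fin 2 × Fin 2) → (Fin 2 × Fin 2) → ℂ,
      IsVNM w ∧ FixesVNM w (redB rhoc ⊗ₖ redC rhoc) ∧
      r = hsNormSq (psdSqrt (rhoc ⊗ₖ rhoc) - pinchBC w (psdSqrt (rhoc ⊗ₖ rhoc))) } :=
    ⟨wF, wF_vnm, fixes_of_vnm wF_vnm, witness_val.symm⟩
  have hub : ∀ r ∈ { r : ℝ | ∃ w : (Fin 2 × Fin 2) → (Fin 2 × Fin 2) → ℂ,
      IsVNM w ∧ FixesVNM w (redB rhoc ⊗ₖ redC rhoc) ∧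
      r = hsNormSq (psdSqrt (rhoc ⊗ₖ rhoc) - pinchBC w (psdSqrt (rhoc ⊗ₖ rhoc))) },
      r ≤ 3/4 := by
    rintro r ⟨w, hw, -, rfl⟩
    rw [psdSqrt_eq]
    exact hsn_le hw
  have hNHb : NHb rhoc rhoc = 3/4 := by
    rw [NHb]
    exact le_antisymm (csSup_le ⟨_, hmem⟩ hub) (le_csSup ⟨3/4, hub⟩ hmem)
  exact ⟨by rw [hNHb], separable_rhoc, by rw [hNHb]; norm_num⟩
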